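/- arXiv:2003.02254 — 2 statements merged into one kernel-verified Lean document; each statement's English description precedes it below -/
import Mathlib

section
/- Let C be a pretriangulated category and let F : C ≌ D be an equivalence of categories where D is a skeletal category. Then D admits the structure of a pretriangulated category (preadditive structure, zero object, ℤ-shift with additive shift functors, distinguished triangles) together with a natural isomorphism Θ : shift_C 1 ⋙ F ≅ F ⋙ shift_D 1 making the underlying functor of F a triangle equivalence, and in addition the suspension functor of D is an automorphism of the category D: the shift-by-1 endofunctor of D has a bijective object map and admits a functor G : D ⥤ D whose composites with it in both orders equal the identity functor of D. -/
open CategoryTheory CategoryTheory.Limits CategoryTheory.Pretriangulated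
open ZeroObject

/-- The data of a pretriangulated structure on a category: a preadditive structure, a zero
object, a shift by `ℤ` with additive shift functors, and a class of distinguished triangles
satisfying the pretriangulated axioms. -/
structure PretriangulatedStruct (D : Type*) [Category D] where
  pre : Preadditive D
  zero : HasZeroObject D
  shift : HasShift D ℤ
  shiftAdditive : ∀ n : ℤ, @Functor.Additive D D _ _ pre pre (@shiftFunctor D ℤ _ _ shift n)
  pretri : @Pretriangulated D _ zero shift pre shiftAdditive

namespace TransportAux

variable {C : Type*} [Category C] {D : Type*} [Category D] (e : C ≌ D)

/-- Additive structure on hom sets of `D` transported along the equivalence. -/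
noncomputable def homAddCommGroup [Preadditive C] (X Y : D) : AddCommGroup (X ⟶ Y) :=
  Equiv.addCommGroup e.fullyFaithfulInverse.homEquiv

lemma map_add' [Preadditive C] {X Y : D} (u v : X ⟶ Y) :
    letI := homAddCommGroup e X Y
    e.inverse.map (u + v) = e.inverse.map u + e.inverse.map v :=
  e.fullyFaithfulInverse.homEquiv.apply_symm_apply _

/-- The transported preadditive structure on `D`. -/
noncomputable def pre [Preadditive C] : Preadditive D where
  homGroup X Y := homAddCommGroup e X Y
  add_comp P Q R f f' g := e.inverse.map_injective (by
    rw [Functor.map_comp, map_add' e, map_add' e, Preadditive.add_comp,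
      Functor.map_comp, Functor.map_comp])
  comp_add P Q R f g g' := e.inverse.map_injective (by
    rw [Functor.map_comp, map_add' e, map_add' e, Preadditive.comp_add,
      Functor.map_comp, Functor.map_comp])

/-- The transported shift functors on `D`. -/
noncomputable def s [HasShift C ℤ] (a : ℤ) : D ⥤ D :=
  e.inverse ⋙ shiftFunctor C a ⋙ e.functor

/-- The compatibility isomorphisms for the transported shift functors. -/
noncomputable def si [HasShift C ℤ] (a : ℤ) :
    e.functor ⋙ s e a ≅ shiftFunctor C a ⋙ e.functor :=
  (Functor.associator e.functor e.inverse (shiftFunctor C a ⋙ e.functor)).symm ≪≫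
    Functor.isoWhiskerRight e.unitIso.symm (shiftFunctor C a ⋙ e.functor) ≪≫
    Functor.leftUnitor _

/-- An equivalence endofunctor of a skeletal category is a strict automorphism. -/
lemma strict_auto {D : Type*} [Category D] (hD : Skeletal D) (H : D ⥤ D) [H.IsEquivalence] :
    Function.Bijective H.obj ∧ ∃ G : D ⥤ D, H ⋙ G = 𝟭 D ∧ G ⋙ H = 𝟭 D := by
  have hbij : Function.Bijective H.obj := by
    constructor
    · intro X Y h
      exact hD ⟨H.preimageIso (eqToIso h)⟩
    · intro Y
      exact ⟨H.objPreimage Y, hD ⟨H.objObjPreimageIso Y⟩⟩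
  refine ⟨hbij, ?_⟩
  let σ : D ≃ D := Equiv.ofBijective H.obj hbij
  have hσ : ∀ X : D, H.obj (σ.symm X) = X := fun X => σ.apply_symm_apply X
  have hσ' : ∀ X : D, σ.symm (H.obj X) = X := fun X => σ.symm_apply_apply X
  let G : D ⥤ D :=
    { obj := fun X => σ.symm X
      map := fun {X Y} f => H.preimage (eqToHom (hσ X) ≫ f ≫ eqToHom (hσ Y).symm)
      map_id := fun X => H.map_injective (by simp)
      map_comp := fun f g => H.map_injective (by simp) }
  refine ⟨G, ?_, ?_⟩
  · refine CategoryTheory.Functor.ext (h_obj := fun X => hσ' X) ?_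
    intro X Y f
    apply H.map_injective
    simp [G, eqToHom_map]
  · refine CategoryTheory.Functor.ext (h_obj := fun X => hσ X) ?_
    intro X Y f
    simp [G]

end TransportAux

/-- Transport of pretriangulated structure to a skeletal category: if `C` is pretriangulated
and `e : C ≌ D` is an equivalence with `D` skeletal, then `D` admits a pretriangulated
structure, with a natural isomorphism `Θ : shift_C 1 ⋙ F ≅ F ⋙ shift_D 1` making
`F = e.functor` a triangle equivalence, and moreover the suspension functor `shift_D 1` is an
automorphism of the category `D`: its object map is bijective and it admits a strictly
inverse functor. -/
theorem transport_pretriangulated_structure_to_skeletal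
    {C : Type*} [Category C] [HasZeroObject C] [HasShift C ℤ] [Preadditive C]
    [∀ n : ℤ, (shiftFunctor C n).Additive] [Pretriangulated C]
    {D : Type*} [Category D] (hD : Skeletal D) (e : C ≌ D) :
    ∃ (S : PretriangulatedStruct D)
      (Θ : shiftFunctor C (1 : ℤ) ⋙ e.functor ≅
        e.functor ⋙ @shiftFunctor D ℤ _ _ S.shift (1 : ℤ)),
      (∀ T ∈ (distTriang C),
        @Triangle.mk D _ S.shift _ _ _ (e.functor.map T.mor₁) (e.functor.map T.mor₂)
            (e.functor.map T.mor₃ ≫ Θ.hom.app T.obj₁) ∈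
          S.pretri.distinguishedTriangles) ∧
      Function.Bijective (@shiftFunctor D ℤ _ _ S.shift (1 : ℤ)).obj ∧
      ∃ G : D ⥤ D, (@shiftFunctor D ℤ _ _ S.shift (1 : ℤ)) ⋙ G = 𝟭 D ∧
        G ⋙ (@shiftFunctor D ℤ _ _ S.shift (1 : ℤ)) = 𝟭 D := by
  -- the preadditive structure
  letI pre : Preadditive D := TransportAux.pre e
  haveI : e.inverse.Additive := ⟨fun {X Y f g} => TransportAux.map_add' e f g⟩
  haveI : e.symm.functor.Additive := ‹e.inverse.Additive›
  haveI hFadd : e.functor.Additive := Equivalence.inverse_additive e.symm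
  -- the zero object
  haveI hz : HasZeroObject D := ⟨⟨e.functor.obj 0, by
    rw [IsZero.iff_id_eq_zero, ← e.functor.map_id, Limits.id_zero, e.functor.map_zero]⟩⟩
  -- the shift
  letI hs : HasShift D ℤ := HasShift.induced e.functor ℤ (TransportAux.s e) (TransportAux.si e)
  letI cs : e.functor.CommShift ℤ :=
    Functor.CommShift.ofInduced e.functor ℤ (TransportAux.s e) (TransportAux.si e)
  haveI shAdd : ∀ n : ℤ, (shiftFunctor D n).Additive := fun n =>
    (inferInstance : (e.inverse ⋙ shiftFunctor C n ⋙ e.functor).Additive)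
  -- localization data for the class of isomorphisms
  set W : MorphismProperty C := MorphismProperty.isomorphisms C with hW
  haveI : e.functor.IsLocalization W :=
    Functor.IsLocalization.of_isEquivalence _ _ (le_refl _)
  haveI : W.HasLeftCalculusOfFractions :=
    { toIsMultiplicative := inferInstance
      exists_leftFraction := fun X Y φ => by
        haveI : IsIso φ.s := φ.hs
        exact ⟨MorphismProperty.LeftFraction.mk (inv φ.s ≫ φ.f) (𝟙 Y)
          ((MorphismProperty.isomorphisms.iff _).2 inferInstance), by simp⟩
      ext := fun X' X Y f₁ f₂ s hs' h => by
        haveI : IsIso s := hs'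
        exact ⟨Y, 𝟙 Y, (MorphismProperty.isomorphisms.iff _).2 inferInstance, by
          simpa using (cancel_epi s).1 h⟩ }
  haveI : W.IsCompatibleWithShift ℤ := ⟨fun a => by
    refine MorphismProperty.ext _ _ (fun X Y f => ?_)
    constructor
    · intro h
      have : IsIso ((shiftFunctor C a).map f) := h
      exact isIso_of_reflects_iso f (shiftFunctor C a)
    · intro h
      have : IsIso f := h
      exact (inferInstance : IsIso ((shiftFunctor C a).map f))⟩
  haveI : W.IsCompatibleWithTriangulation :=
    { compatible_with_triangulation := fun T₁ T₂ hT₁ hT₂ a b ha hb comm => by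
        haveI : IsIso a := ha
        haveI : IsIso b := hb
        obtain ⟨c, hc₁, hc₂⟩ :=
          Pretriangulated.complete_distinguished_triangle_morphism T₁ T₂ hT₁ hT₂ a b comm
        have : IsIso c := isIso₃_of_isIso₁₂ (Triangle.homMk T₁ T₂ a b c comm hc₁ hc₂)
          hT₁ hT₂ (show IsIso a from inferInstance) (show IsIso b from inferInstance)
        exact ⟨c, (MorphismProperty.isomorphisms.iff _).2 this, hc₁, hc₂⟩ }
  -- the pretriangulated structure on `D`
  letI pretri : Pretriangulated D := Triangulated.Localization.pretriangulated e.functor W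
  obtain ⟨hbij, G, hG₁, hG₂⟩ := TransportAux.strict_auto hD (shiftFunctor D (1 : ℤ))
  refine ⟨⟨pre, hz, hs, shAdd, pretri⟩, e.functor.commShiftIso (1 : ℤ), ?_, hbij, G, hG₁, hG₂⟩
  intro T hT
  exact ⟨T, Iso.refl _, hT⟩
end

section
/- Let C be a pretriangulated category and let S = Skeleton C be its skeleton, with the canonical equivalence ε : S ≌ C. Then S admits the structure of a pretriangulated category together with a natural isomorphism shift_S 1 ⋙ ε.functor ≅ ε.functor ⋙ shift_C 1 making ε.functor a triangle equivalence; moreover the suspension functor shift_S 1 of S is an automorphism of the category S (its object map is bijective and it admits a strictly inverse functor). If C is triangulated (satisfies the octahedral axiom), then so is S. -/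
open CategoryTheory CategoryTheory.Limits CategoryTheory.Pretriangulated

section Aux

variable {C : Type*} [Category C]

instance : (MorphismProperty.isomorphisms C).HasLeftCalculusOfFractions where
  exists_leftFraction X Y φ := by
    have : IsIso φ.s := φ.hs
    exact ⟨MorphismProperty.LeftFraction.mk (inv φ.s ≫ φ.f) (𝟙 Y)
      (MorphismProperty.isomorphisms.infer_property _), by simp⟩
  ext X' X Y f₁ f₂ s hs h := by
    have : IsIso s := hs
    exact ⟨Y, 𝟙 Y, MorphismProperty.isomorphisms.infer_property _, by
      simpa using ((cancel_epi s).1 h)⟩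

instance [HasShift C ℤ] : (MorphismProperty.isomorphisms C).IsCompatibleWithShift ℤ where
  condition a := by
    ext X Y f
    constructor
    · intro (h : IsIso (f⟦a⟧'))
      haveI := h
      exact isIso_of_reflects_iso f (shiftFunctor C a)
    · intro (h : IsIso f)
      haveI := h
      exact (inferInstance : IsIso (f⟦a⟧'))

instance [HasZeroObject C] [HasShift C ℤ] [Preadditive C]
    [∀ n : ℤ, (shiftFunctor C n).Additive] [Pretriangulated C] :
    (MorphismProperty.isomorphisms C).IsCompatibleWithTriangulation where
  compatible_with_triangulation T₁ T₂ hT₁ hT₂ a b ha hb comm := by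
    have : IsIso a := ha
    have : IsIso b := hb
    let i := isoTriangleOfIso₁₂ T₁ T₂ hT₁ hT₂ (asIso a) (asIso b) comm
    have : IsIso (Triangle.π₃.map i.hom) := inferInstance
    refine ⟨i.hom.hom₃, this, ?_, ?_⟩
    · exact i.hom.comm₂
    · exact i.hom.comm₃

theorem exists_strict_inverse {S : Type*} [Category S] (F : S ⥤ S) [F.Full] [F.Faithful]
    (hF : Function.Bijective F.obj) :
    ∃ G : S ⥤ S, F ⋙ G = 𝟭 S ∧ G ⋙ F = 𝟭 S := by
  let E := Equiv.ofBijective F.obj hF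
  let G : S ⥤ S :=
  { obj := fun Y => E.symm Y
    map := fun {Y Y'} g => F.preimage
      (eqToHom (E.apply_symm_apply Y) ≫ g ≫ eqToHom (E.apply_symm_apply Y').symm)
    map_id := fun Y => by
      apply F.map_injective
      simp
      erw [eqToHom_trans, eqToHom_refl]
    map_comp := fun f g => by
      apply F.map_injective
      simp
      erw [eqToHom_trans_assoc, eqToHom_refl, Category.id_comp] }
  refine ⟨G, ?_, ?_⟩
  · refine CategoryTheory.Functor.ext (fun X => E.symm_apply_apply X) (fun X Y f => ?_)
    apply F.map_injective
    simp [G, eqToHom_map]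
    congr 1
    exact (eqToHom_map F _).symm
  · refine CategoryTheory.Functor.ext (fun Y => E.apply_symm_apply Y) (fun X Y f => ?_)
    simp [G, eqToHom_map]

end Aux

/-- The skeleton of a pretriangulated category `C` admits a pretriangulated structure together
with a natural isomorphism `shift_S 1 ⋙ ε.functor ≅ ε.functor ⋙ shift_C 1` making the
canonical equivalence functor `ε.functor : Skeleton C ⥤ C` a triangle equivalence; moreover
the suspension functor of the skeleton is an automorphism of the category (bijective on
objects, with a strictly inverse functor), and if `C` is triangulated then so is its
skeleton. -/
theorem skeleton_pretriangulated
    {C : Type*} [Category C] [HasZeroObject C] [HasShift C ℤ] [Preadditive C]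
    [∀ n : ℤ, (shiftFunctor C n).Additive] [Pretriangulated C] :
    ∃ (S : PretriangulatedStruct (Skeleton C))
      (Θ : @shiftFunctor (Skeleton C) ℤ _ _ S.shift (1 : ℤ) ⋙ (skeletonEquivalence C).functor ≅
        (skeletonEquivalence C).functor ⋙ shiftFunctor C (1 : ℤ)),
      (∀ T ∈ S.pretri.distinguishedTriangles,
        Triangle.mk ((skeletonEquivalence C).functor.map
            (@Triangle.mor₁ (Skeleton C) _ S.shift T))
          ((skeletonEquivalence C).functor.map (@Triangle.mor₂ (Skeleton C) _ S.shift T))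
          ((skeletonEquivalence C).functor.map (@Triangle.mor₃ (Skeleton C) _ S.shift T) ≫
            Θ.hom.app (@Triangle.obj₁ (Skeleton C) _ S.shift T)) ∈ distTriang C) ∧
      Function.Bijective (@shiftFunctor (Skeleton C) ℤ _ _ S.shift (1 : ℤ)).obj ∧
      (∃ G : Skeleton C ⥤ Skeleton C,
        (@shiftFunctor (Skeleton C) ℤ _ _ S.shift (1 : ℤ)) ⋙ G = 𝟭 (Skeleton C) ∧
        G ⋙ (@shiftFunctor (Skeleton C) ℤ _ _ S.shift (1 : ℤ)) = 𝟭 (Skeleton C)) ∧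
      (IsTriangulated C →
        @IsTriangulated (Skeleton C) _ S.pre S.zero S.shift S.shiftAdditive S.pretri) := by
  let e := skeletonEquivalence C
  let L : C ⥤ Skeleton C := e.inverse
  let W := MorphismProperty.isomorphisms C
  haveI : L.IsLocalization W := Functor.IsLocalization.of_isEquivalence L W le_rfl
  letI pre : Preadditive (Skeleton C) := Localization.preadditive L W
  haveI : L.Additive := Localization.functor_additive L W
  haveI zero : HasZeroObject (Skeleton C) := (L.map_isZero (isZero_zero C)).hasZeroObject
  letI shift : HasShift (Skeleton C) ℤ := HasShift.localized L W ℤ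
  haveI : L.CommShift ℤ := Functor.CommShift.localized L W ℤ
  haveI shiftAdd : ∀ n : ℤ, (shiftFunctor (Skeleton C) n).Additive := fun n => by
    rw [Localization.functor_additive_iff L W]
    exact Functor.additive_of_iso (L.commShiftIso n)
  letI pretri : Pretriangulated (Skeleton C) :=
    Triangulated.Localization.pretriangulated L W
  haveI : L.IsTriangulated := Triangulated.Localization.isTriangulated_functor L W
  haveI : Localization.Lifting L W (𝟭 C) e.functor := ⟨e.counitIso⟩
  letI : e.functor.CommShift ℤ := Functor.commShiftOfLocalization L W ℤ (𝟭 C) e.functor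
  haveI : L.mapArrow.EssSurj := Localization.essSurj_mapArrow L W
  haveI : e.functor.IsTriangulated :=
    Functor.isTriangulated_of_precomp_iso (Localization.Lifting.iso L W (𝟭 C) e.functor)
  have hbij : Function.Bijective
      (@shiftFunctor (Skeleton C) ℤ _ _ shift (1 : ℤ)).obj := by
    constructor
    · intro X Y h
      exact skeleton_skeletal C
        ⟨(shiftFunctor (Skeleton C) (1 : ℤ)).preimageIso (eqToIso h)⟩
    · intro Y
      exact ⟨(shiftFunctor (Skeleton C) (1 : ℤ)).objPreimage Y,
        skeleton_skeletal C ⟨(shiftFunctor (Skeleton C) (1 : ℤ)).objObjPreimageIso Y⟩⟩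
  refine ⟨⟨pre, zero, shift, shiftAdd, pretri⟩, e.functor.commShiftIso (1 : ℤ),
    fun T hT => ?_, hbij, exists_strict_inverse _ hbij, fun hC => ?_⟩
  · exact e.functor.map_distinguished T hT
  · exact Triangulated.Localization.isTriangulated L W
end
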